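/- In the same perturbed push-sum setting, if additionally (α_t) is non-increasing with Σ_t α_t² < ∞, then Σ_{t=0}^∞ α_t ‖x_i[t] − x̄[t]‖ < ∞ for every agent i. -/

import Mathlib

open Matrix Finset Filter

private lemma pow_entry_nonneg' {n : ℕ} (P : Matrix (Fin n) (Fin n) ℝ)
    (h : ∀ i j, 0 ≤ P i j) (m : ℕ) : ∀ i j, 0 ≤ (P ^ m) i j := by
  induction m with
  | zero =>
    intro i j
    rw [pow_zero]
    by_cases hij : i = j <;> simp [Matrix.one_apply, hij]
  | succ m ih =>
    intro i j
    rw [pow_succ, Matrix.mul_apply]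
    exact Finset.sum_nonneg fun l _ => mul_nonneg (ih i l) (h l j)

private lemma pow_col_sum' {n : ℕ} (P : Matrix (Fin n) (Fin n) ℝ)
    (hcol : ∀ j, ∑ i, P i j = 1) (m : ℕ) : ∀ j, ∑ i, (P ^ m) i j = 1 := by
  induction m with
  | zero => intro j; simp [Matrix.one_apply]
  | succ m ih =>
    intro j
    simp only [pow_succ, Matrix.mul_apply]
    rw [Finset.sum_comm]
    calc ∑ l, ∑ i, (P ^ m) i l * P l j = ∑ l, (∑ i, (P ^ m) i l) * P l j := by
          simp [Finset.sum_mul]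
      _ = ∑ l, P l j := by simp [ih]
      _ = 1 := hcol j

private lemma nonexp' {n d : ℕ} (M : Matrix (Fin n) (Fin n) ℝ)
    (hnn : ∀ i j, 0 ≤ M i j) (hc : ∀ j, ∑ i, M i j = 1)
    (v : Fin n → EuclideanSpace ℝ (Fin d)) :
    ∑ i, ‖∑ j, M i j • v j‖ ≤ ∑ i, ‖v i‖ := by
  calc ∑ i, ‖∑ j, M i j • v j‖ ≤ ∑ i, ∑ j, M i j * ‖v j‖ := by
        refine Finset.sum_le_sum fun i _ => ?_
        refine (norm_sum_le _ _).trans (Finset.sum_le_sum fun j _ => ?_)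
        rw [norm_smul, Real.norm_eq_abs, abs_of_nonneg (hnn i j)]
    _ = ∑ j, (∑ i, M i j) * ‖v j‖ := by rw [Finset.sum_comm]; simp [Finset.sum_mul]
    _ = ∑ j, ‖v j‖ := by simp [hc]

private lemma contraction' {n d : ℕ} (M : Matrix (Fin n) (Fin n) ℝ) (δ : ℝ)
    (hδ : ∀ i j, δ ≤ M i j) (hc : ∀ j, ∑ i, M i j = 1)
    (v : Fin n → EuclideanSpace ℝ (Fin d)) (hv : ∑ j, v j = 0) :
    ∑ i, ‖∑ j, M i j • v j‖ ≤ (1 - n * δ) * ∑ i, ‖v i‖ := by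
  have key : ∀ i, ∑ j, M i j • v j = ∑ j, (M i j - δ) • v j := by
    intro i
    have h2 : ∑ j, (M i j - δ) • v j = ∑ j, M i j • v j - δ • ∑ j, v j := by
      rw [Finset.smul_sum, ← Finset.sum_sub_distrib]
      exact Finset.sum_congr rfl fun j _ => by rw [sub_smul]
    rw [h2, hv, smul_zero, sub_zero]
  calc ∑ i, ‖∑ j, M i j • v j‖ ≤ ∑ i, ∑ j, (M i j - δ) * ‖v j‖ := by
        refine Finset.sum_le_sum fun i _ => ?_
        rw [key i]
        refine (norm_sum_le _ _).trans (Finset.sum_le_sum fun j _ => ?_)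
        rw [norm_smul, Real.norm_eq_abs, abs_of_nonneg (sub_nonneg.2 (hδ i j))]
    _ = (1 - n * δ) * ∑ j, ‖v j‖ := by
        rw [Finset.sum_comm, Finset.mul_sum]
        refine Finset.sum_congr rfl fun j _ => ?_
        rw [← Finset.sum_mul, Finset.sum_sub_distrib, hc, Finset.sum_const, Finset.card_univ,
          Fintype.card_fin, nsmul_eq_mul]

set_option maxHeartbeats 1000000 in
theorem stmt_16 {n d : ℕ} (P : Matrix (Fin n) (Fin n) ℝ)
    (hnonneg : ∀ i j, 0 ≤ P i j)
    (hcol : ∀ j, ∑ i, P i j = 1)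
    (hprim : ∃ k : ℕ, ∀ i j, 0 < (P ^ k) i j)
    (y : ℕ → Fin n → ℝ)
    (hy : ∀ t, y t = (P ^ t) *ᵥ (fun _ => (1 : ℝ)))
    (hypos : ∀ t i, 0 < y t i)
    (Q : ℕ → Matrix (Fin n) (Fin n) ℝ)
    (hQ : ∀ t, Q t = Matrix.diagonal (fun i => (y (t + 1) i)⁻¹) * P * Matrix.diagonal (y t))
    (α : ℕ → ℝ) (hαpos : ∀ t, 0 < α t)
    (hαmono : ∀ s t : ℕ, s ≤ t → α t ≤ α s)
    (hαsq : Summable (fun t => (α t) ^ 2))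
    (L : ℝ) (hL : 0 ≤ L)
    (x : ℕ → Fin n → EuclideanSpace ℝ (Fin d))
    (ε : ℕ → Fin n → EuclideanSpace ℝ (Fin d))
    (hεbound : ∀ t i, ‖ε t i‖ ≤ α t * L / y (t + 1) i)
    (hupdate : ∀ t i, x (t + 1) i = (∑ j, Q t i j • x t j) + ε t i) :
    ∀ i, Summable (fun t => α t * ‖x t i - (n : ℝ)⁻¹ • ∑ j, x t j‖) := by
  intro i
  rcases Nat.lt_or_ge n 2 with hn | hn
  · interval_cases n
    · exact i.elim0
    · have hz : ∀ t, α t * ‖x t i - ((1 : ℕ) : ℝ)⁻¹ • ∑ j, x t j‖ = 0 := by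
        intro t
        have h1 : (∑ j, x t j) = x t i := by
          rw [Fin.sum_univ_one, Subsingleton.elim (0 : Fin 1) i]
        rw [h1]
        simp
      exact summable_zero.congr fun t => (hz t).symm
  -- main case : n ≥ 2
  obtain ⟨k, hk⟩ := hprim
  have hnR : (0 : ℝ) < (n : ℝ) := by exact_mod_cast (by omega : 0 < n)
  have hk1 : 1 ≤ k := by
    by_contra h
    push_neg at h
    interval_cases k
    have h2 := hk ⟨0, by omega⟩ ⟨1, by omega⟩
    rw [pow_zero, Matrix.one_apply_ne (Fin.ne_of_val_ne (by norm_num))] at h2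
    exact lt_irrefl 0 h2
  have hne : (Finset.univ : Finset (Fin n × Fin n)).Nonempty :=
    ⟨(⟨0, by omega⟩, ⟨0, by omega⟩), Finset.mem_univ _⟩
  set δ : ℝ := Finset.univ.inf' hne (fun p : Fin n × Fin n => (P ^ k) p.1 p.2) with hδdef
  have hδpos : 0 < δ := (Finset.lt_inf'_iff hne).2 fun p _ => hk p.1 p.2
  have hδle : ∀ a b : Fin n, δ ≤ (P ^ k) a b := fun a b => Finset.inf'_le _ (Finset.mem_univ (a, b))
  have hkcol : ∀ j, ∑ i', (P ^ k) i' j = 1 := pow_col_sum' P hcol k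
  have hnδ : (n : ℝ) * δ ≤ 1 := by
    have h1 := hkcol ⟨0, by omega⟩
    have h2 : (n : ℝ) * δ = ∑ _i' : Fin n, δ := by
      rw [Finset.sum_const, Finset.card_univ, Fintype.card_fin, nsmul_eq_mul]
    rw [h2, ← h1]
    exact Finset.sum_le_sum fun a _ => hδle a _
  set lam : ℝ := 1 - n * δ with hlam
  have hlam0 : 0 ≤ lam := by rw [hlam]; linarith
  have hlam1 : lam < 1 := by
    have : (0 : ℝ) < (n : ℝ) * δ := by positivity
    rw [hlam]; linarith
  -- facts about y
  have hyapp : ∀ t i', y t i' = ∑ j, (P ^ t) i' j := by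
    intro t i'
    rw [hy t]
    simp [Matrix.mulVec, dotProduct]
  have hysum : ∀ t, ∑ i', y t i' = n := by
    intro t
    simp only [hyapp]
    refine Finset.sum_comm.trans ?_
    simp [pow_col_sum' P hcol t]
  have hyub : ∀ t i', y t i' ≤ n := by
    intro t i'
    calc y t i' ≤ ∑ i'', y t i'' :=
          Finset.single_le_sum (fun a _ => (hypos t a).le) (Finset.mem_univ i')
      _ = n := hysum t
  have hyrecK : ∀ t i', y (t + k) i' = ∑ j, (P ^ k) i' j * y t j := by
    intro t i'
    have h1 : y (t + k) = P ^ k *ᵥ y t := by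
      rw [hy (t + k), hy t, Matrix.mulVec_mulVec, ← pow_add, add_comm t k]
    rw [h1]
    simp [Matrix.mulVec, dotProduct]
  have hc2ne : ((Finset.range k) ×ˢ (Finset.univ : Finset (Fin n))).Nonempty :=
    ⟨(0, ⟨0, by omega⟩), by simp [Finset.mem_product]; omega⟩
  set c : ℝ := min (δ * n)
      (((Finset.range k) ×ˢ (Finset.univ : Finset (Fin n))).inf' hc2ne (fun p => y p.1 p.2))
    with hcdef
  have hcpos : 0 < c := by
    apply lt_min
    · positivity
    · exact (Finset.lt_inf'_iff hc2ne).2 fun p _ => hypos p.1 p.2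
  have hylb : ∀ t i', c ≤ y t i' := by
    intro t i'
    rcases Nat.lt_or_ge t k with h | h
    · have hmem : (t, i') ∈ (Finset.range k ×ˢ (Finset.univ : Finset (Fin n))) := by
        simp [Finset.mem_product, Finset.mem_range, h]
      exact (min_le_right _ _).trans (Finset.inf'_le _ hmem)
    · have h1 : (t - k) + k = t := Nat.sub_add_cancel h
      have h2 := hyrecK (t - k) i'
      rw [h1] at h2
      have h3 : δ * n ≤ y t i' := by
        rw [h2]
        calc δ * (n : ℝ) = δ * ∑ j, y (t - k) j := by rw [hysum]
          _ = ∑ j, δ * y (t - k) j := by rw [Finset.mul_sum]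
          _ ≤ ∑ j, (P ^ k) i' j * y (t - k) j :=
            Finset.sum_le_sum fun j _ =>
              mul_le_mul_of_nonneg_right (hδle i' j) (hypos _ j).le
      exact (min_le_left _ _).trans h3
  -- entries of Q
  have hQapp : ∀ t a b, Q t a b = (y (t + 1) a)⁻¹ * P a b * y t b := by
    intro t a b
    rw [hQ t, Matrix.mul_diagonal, Matrix.diagonal_mul]
  -- definitions
  set w : ℕ → Fin n → EuclideanSpace ℝ (Fin d) := fun t j => y t j • x t j with hwdef
  set m : ℕ → EuclideanSpace ℝ (Fin d) := fun t => (n : ℝ)⁻¹ • ∑ j, w t j with hmdef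
  set u : ℕ → Fin n → EuclideanSpace ℝ (Fin d) := fun t j => w t j - y t j • m t with hudef
  set η : ℕ → Fin n → EuclideanSpace ℝ (Fin d) := fun t j => y (t + 1) j • ε t j with hηdef
  set ζ : ℕ → Fin n → EuclideanSpace ℝ (Fin d) :=
    fun t j => η t j - y (t + 1) j • ((n : ℝ)⁻¹ • ∑ l, η t l) with hζdef
  set a : ℕ → ℝ := fun t => ∑ j, ‖u t j‖ with hadef
  set Cc : ℝ := n * ((1 + n) * L) with hCcdef
  have hCc0 : (0 : ℝ) ≤ Cc := by rw [hCcdef]; positivity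
  have ha0 : ∀ t, 0 ≤ a t := fun t => Finset.sum_nonneg fun j _ => norm_nonneg _
  -- noise bounds
  have hηbound : ∀ t j, ‖η t j‖ ≤ α t * L := by
    intro t j
    have hyj := hypos (t + 1) j
    have h1 : ‖η t j‖ = y (t + 1) j * ‖ε t j‖ := by
      simp only [hηdef]
      rw [norm_smul, Real.norm_eq_abs, abs_of_pos hyj]
    rw [h1]
    calc y (t + 1) j * ‖ε t j‖ ≤ y (t + 1) j * (α t * L / y (t + 1) j) :=
          mul_le_mul_of_nonneg_left (hεbound t j) hyj.le
      _ = α t * L := by field_simp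
  have hηsum : ∀ t, ‖∑ l, η t l‖ ≤ n * (α t * L) := by
    intro t
    calc ‖∑ l, η t l‖ ≤ ∑ l, ‖η t l‖ := norm_sum_le _ _
      _ ≤ ∑ _l : Fin n, α t * L := Finset.sum_le_sum fun l _ => hηbound t l
      _ = n * (α t * L) := by
          rw [Finset.sum_const, Finset.card_univ, Fintype.card_fin, nsmul_eq_mul]
  have hζsum : ∀ t, ∑ j, ‖ζ t j‖ ≤ Cc * α t := by
    intro t
    have hb : ∀ j, ‖ζ t j‖ ≤ (1 + n) * (α t * L) := by
      intro j
      have hyj := hypos (t + 1) j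
      have h1 : ‖ζ t j‖ ≤ ‖η t j‖ + ‖y (t + 1) j • ((n : ℝ)⁻¹ • ∑ l, η t l)‖ := by
        simp only [hζdef]
        exact norm_sub_le _ _
      have h2 : ‖y (t + 1) j • ((n : ℝ)⁻¹ • ∑ l, η t l)‖
          = y (t + 1) j * ((n : ℝ)⁻¹ * ‖∑ l, η t l‖) := by
        rw [norm_smul, norm_smul, Real.norm_eq_abs, Real.norm_eq_abs, abs_of_pos hyj,
          abs_of_pos (by positivity : (0 : ℝ) < (n : ℝ)⁻¹)]
      have h3 : y (t + 1) j * ((n : ℝ)⁻¹ * ‖∑ l, η t l‖) ≤ n * (α t * L) := by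
        calc y (t + 1) j * ((n : ℝ)⁻¹ * ‖∑ l, η t l‖)
            ≤ n * ((n : ℝ)⁻¹ * (n * (α t * L))) := by
              refine mul_le_mul (hyub _ _) ?_ (by positivity) hnR.le
              exact mul_le_mul_of_nonneg_left (hηsum t) (by positivity)
          _ = n * (α t * L) := by field_simp
      have h4 := hηbound t j
      rw [h2] at h1
      nlinarith
    calc ∑ j, ‖ζ t j‖ ≤ ∑ _j : Fin n, (1 + n) * (α t * L) := Finset.sum_le_sum fun j _ => hb j
      _ = Cc * α t := by
          rw [Finset.sum_const, Finset.card_univ, Fintype.card_fin, nsmul_eq_mul, hCcdef]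
          ring
  -- recurrences
  have hwrec : ∀ t j, w (t + 1) j = (∑ l, P j l • w t l) + η t j := by
    intro t j
    simp only [hwdef, hηdef]
    rw [hupdate t j, smul_add]
    congr 1
    rw [Finset.smul_sum]
    refine Finset.sum_congr rfl fun l _ => ?_
    rw [smul_smul, smul_smul, hQapp t j l]
    congr 1
    rw [← mul_assoc, ← mul_assoc, mul_inv_cancel₀ (hypos (t + 1) j).ne', one_mul]
  have hwsum : ∀ t, ∑ j, w (t + 1) j = (∑ j, w t j) + ∑ j, η t j := by
    intro t
    calc ∑ j, w (t + 1) j = ∑ j, ((∑ l, P j l • w t l) + η t j) :=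
          Finset.sum_congr rfl fun j _ => hwrec t j
      _ = (∑ j, ∑ l, P j l • w t l) + ∑ j, η t j := Finset.sum_add_distrib
      _ = (∑ j, w t j) + ∑ j, η t j := by
          congr 1
          rw [Finset.sum_comm]
          calc ∑ l, ∑ j, P j l • w t l = ∑ l, (∑ j, P j l) • w t l :=
                Finset.sum_congr rfl fun l _ => (Finset.sum_smul).symm
            _ = ∑ l, w t l := by simp [hcol]
  have hmrec : ∀ t, m (t + 1) = m t + (n : ℝ)⁻¹ • ∑ j, η t j := by
    intro t
    simp only [hmdef]
    rw [hwsum t, smul_add]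
  have hyrec1 : ∀ t j, y (t + 1) j = ∑ l, P j l * y t l := by
    intro t j
    have h1 : y (t + 1) = P *ᵥ y t := by
      rw [hy (t + 1), hy t, Matrix.mulVec_mulVec, ← pow_succ']
    rw [h1]
    simp [Matrix.mulVec, dotProduct]
  have husum : ∀ t, ∑ j, u t j = 0 := by
    intro t
    simp only [hudef, hmdef]
    rw [Finset.sum_sub_distrib, ← Finset.sum_smul, hysum t, smul_smul,
      mul_inv_cancel₀ hnR.ne', one_smul, sub_self]
  have hurec : ∀ t j, u (t + 1) j = (∑ l, P j l • u t l) + ζ t j := by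
    intro t j
    have h1 : ∑ l, P j l • u t l = (∑ l, P j l • w t l) - y (t + 1) j • m t := by
      simp only [hudef, smul_sub, smul_smul]
      rw [Finset.sum_sub_distrib, ← Finset.sum_smul, ← hyrec1 t j]
    rw [h1]
    simp only [hudef, hζdef]
    rw [hwrec t j, hmrec t, smul_add]
    abel
  -- k-step expansion
  have expand : ∀ t s, ∃ e : Fin n → EuclideanSpace ℝ (Fin d),
      (∀ j, u (t + s) j = (∑ l, (P ^ s) j l • u t l) + e j) ∧
      ∑ j, ‖e j‖ ≤ ∑ r ∈ Finset.range s, Cc * α (t + r) := by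
    intro t s
    induction s with
    | zero =>
      refine ⟨0, fun j => ?_, by simp⟩
      have h1 : ∑ l, (P ^ 0) j l • u t l = u t j := by
        rw [pow_zero, Finset.sum_eq_single j]
        · rw [Matrix.one_apply_eq, one_smul]
        · intro b _ hb
          rw [Matrix.one_apply_ne (Ne.symm hb), zero_smul]
        · intro hj
          exact absurd (Finset.mem_univ j) hj
      rw [Nat.add_zero, h1]
      simp
    | succ s ih =>
      obtain ⟨e, he1, he2⟩ := ih
      refine ⟨fun j => (∑ l, P j l • e l) + ζ (t + s) j, fun j => ?_, ?_⟩
      · rw [show t + (s + 1) = (t + s) + 1 from rfl, hurec (t + s) j]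
        have h2 : ∑ l, P j l • u (t + s) l
            = (∑ q, (P ^ (s + 1)) j q • u t q) + ∑ l, P j l • e l := by
          calc ∑ l, P j l • u (t + s) l
              = ∑ l, P j l • ((∑ q, (P ^ s) l q • u t q) + e l) :=
                Finset.sum_congr rfl fun l _ => by rw [he1 l]
            _ = (∑ l, ∑ q, (P j l * (P ^ s) l q) • u t q) + ∑ l, P j l • e l := by
                simp only [smul_add, Finset.sum_add_distrib, Finset.smul_sum, smul_smul]
            _ = (∑ q, (∑ l, P j l * (P ^ s) l q) • u t q) + ∑ l, P j l • e l := by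
                rw [Finset.sum_comm]
                exact congrArg (· + _) (Finset.sum_congr rfl fun q _ => (Finset.sum_smul).symm)
            _ = (∑ q, (P ^ (s + 1)) j q • u t q) + ∑ l, P j l • e l := by
                refine congrArg (· + _) (Finset.sum_congr rfl fun q _ => ?_)
                rw [← Matrix.mul_apply, ← pow_succ']
        rw [h2]
        abel
      · calc ∑ j, ‖(∑ l, P j l • e l) + ζ (t + s) j‖
            ≤ ∑ j, (‖∑ l, P j l • e l‖ + ‖ζ (t + s) j‖) :=
              Finset.sum_le_sum fun j _ => norm_add_le _ _
          _ = (∑ j, ‖∑ l, P j l • e l‖) + ∑ j, ‖ζ (t + s) j‖ := Finset.sum_add_distrib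
          _ ≤ (∑ j, ‖e j‖) + Cc * α (t + s) :=
              add_le_add (nonexp' P hnonneg hcol e) (hζsum (t + s))
          _ ≤ (∑ r ∈ Finset.range s, Cc * α (t + r)) + Cc * α (t + s) :=
              add_le_add_left he2 _
          _ = ∑ r ∈ Finset.range (s + 1), Cc * α (t + r) := (Finset.sum_range_succ _ s).symm
  -- k-step contraction for a
  have hakrec : ∀ t, a (t + k) ≤ lam * a t + (Cc * k) * α t := by
    intro t
    obtain ⟨e, he1, he2⟩ := expand t k
    simp only [hadef]
    calc ∑ j, ‖u (t + k) j‖ = ∑ j, ‖(∑ l, (P ^ k) j l • u t l) + e j‖ :=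
          Finset.sum_congr rfl fun j _ => by rw [he1 j]
      _ ≤ ∑ j, (‖∑ l, (P ^ k) j l • u t l‖ + ‖e j‖) :=
          Finset.sum_le_sum fun j _ => norm_add_le _ _
      _ = (∑ j, ‖∑ l, (P ^ k) j l • u t l‖) + ∑ j, ‖e j‖ := Finset.sum_add_distrib
      _ ≤ lam * (∑ l, ‖u t l‖) + (Cc * k) * α t := by
          refine add_le_add ?_ ?_
          · rw [hlam]
            exact contraction' (P ^ k) δ hδle hkcol (u t) (husum t)
          · refine he2.trans ?_
            calc ∑ r ∈ Finset.range k, Cc * α (t + r)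
                ≤ ∑ _r ∈ Finset.range k, Cc * α t :=
                  Finset.sum_le_sum fun r _ =>
                    mul_le_mul_of_nonneg_left (hαmono t (t + r) (Nat.le_add_right _ _)) hCc0
              _ = (Cc * k) * α t := by
                  rw [Finset.sum_const, Finset.card_range, nsmul_eq_mul]; ring
  -- the weighted sequence
  have hgrec : ∀ t, α (t + k) * a (t + k) ≤ lam * (α t * a t) + (Cc * k) * α t ^ 2 := by
    intro t
    have h1 := hakrec t
    have h2 := hαmono t (t + k) (Nat.le_add_right _ _)
    have h3 := (hαpos (t + k)).le
    have h4 := (hαpos t).le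
    have hCck0 : (0 : ℝ) ≤ Cc * k := by positivity
    nlinarith [mul_le_mul_of_nonneg_left h1 h3,
      mul_le_mul_of_nonneg_right h2 (mul_nonneg hlam0 (ha0 t)),
      mul_le_mul_of_nonneg_right h2 (mul_nonneg hCck0 h4)]
  set A : ℝ := ∑' t, (α t) ^ 2 with hA
  have hsumA : ∀ N, ∑ t ∈ Finset.range N, (α t) ^ 2 ≤ A :=
    fun N => Summable.sum_le_tsum _ (fun t _ => sq_nonneg _) hαsq
  set K : ℝ := ∑ t ∈ Finset.range k, α t * a t with hK
  have hCck0 : (0 : ℝ) ≤ Cc * k := by positivity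
  have hbound : ∀ N, ∑ t ∈ Finset.range N, α t * a t ≤ (K + (Cc * k) * A) / (1 - lam) := by
    intro N
    have h1 : ∑ t ∈ Finset.range N, α t * a t ≤ ∑ t ∈ Finset.range (k + N), α t * a t :=
      Finset.sum_le_sum_of_subset_of_nonneg (Finset.range_subset_range.2 (Nat.le_add_left _ _))
        (fun t _ _ => mul_nonneg (hαpos t).le (ha0 t))
    have h2 : ∑ t ∈ Finset.range (k + N), α t * a t
        = K + ∑ s ∈ Finset.range N, α (k + s) * a (k + s) := by
      rw [Finset.sum_range_add]
    have h3 : ∑ s ∈ Finset.range N, α (k + s) * a (k + s)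
        ≤ lam * (∑ s ∈ Finset.range N, α s * a s) + (Cc * k) * A := by
      calc ∑ s ∈ Finset.range N, α (k + s) * a (k + s)
          = ∑ s ∈ Finset.range N, α (s + k) * a (s + k) := by
            refine Finset.sum_congr rfl fun s _ => by rw [Nat.add_comm k s]
        _ ≤ ∑ s ∈ Finset.range N, (lam * (α s * a s) + (Cc * k) * α s ^ 2) :=
            Finset.sum_le_sum fun s _ => hgrec s
        _ = lam * (∑ s ∈ Finset.range N, α s * a s)
            + (Cc * k) * ∑ s ∈ Finset.range N, α s ^ 2 := by
            rw [Finset.sum_add_distrib, Finset.mul_sum, Finset.mul_sum]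
        _ ≤ lam * (∑ s ∈ Finset.range N, α s * a s) + (Cc * k) * A :=
            add_le_add_right (mul_le_mul_of_nonneg_left (hsumA N) hCck0) _
    have h5 : 0 < 1 - lam := by linarith
    rw [le_div_iff₀ h5]
    nlinarith
  have hgsummable : Summable (fun t => α t * a t) :=
    summable_of_sum_range_le (fun t => mul_nonneg (hαpos t).le (ha0 t)) hbound
  -- comparison with the consensus error
  have hxu : ∀ t j, ‖x t j - m t‖ ≤ ‖u t j‖ / c := by
    intro t j
    have h1 : u t j = y t j • (x t j - m t) := by
      simp only [hudef, hwdef]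
      rw [smul_sub]
    rw [le_div_iff₀ hcpos, h1, norm_smul, Real.norm_eq_abs, abs_of_pos (hypos t j)]
    calc ‖x t j - m t‖ * c ≤ ‖x t j - m t‖ * y t j :=
          mul_le_mul_of_nonneg_left (hylb t j) (norm_nonneg _)
      _ = y t j * ‖x t j - m t‖ := mul_comm _ _
  have hxbar : ∀ t, ‖((n : ℝ)⁻¹ • ∑ j, x t j) - m t‖ ≤ a t / c := by
    intro t
    have h1 : ((n : ℝ)⁻¹ • ∑ j, x t j) - m t = (n : ℝ)⁻¹ • ∑ j, (x t j - m t) := by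
      rw [Finset.sum_sub_distrib, smul_sub]
      congr 1
      rw [Finset.sum_const, Finset.card_univ, Fintype.card_fin,
        ← Nat.cast_smul_eq_nsmul ℝ, smul_smul, inv_mul_cancel₀ hnR.ne', one_smul]
    rw [h1]
    have hninv1 : (n : ℝ)⁻¹ ≤ 1 := by
      rw [inv_le_one_iff₀]
      right
      exact_mod_cast (by omega : 1 ≤ n)
    calc ‖(n : ℝ)⁻¹ • ∑ j, (x t j - m t)‖ = (n : ℝ)⁻¹ * ‖∑ j, (x t j - m t)‖ := by
          rw [norm_smul, Real.norm_eq_abs, abs_of_pos (by positivity)]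
      _ ≤ 1 * ∑ j, ‖x t j - m t‖ :=
          mul_le_mul hninv1 (norm_sum_le _ _) (norm_nonneg _) zero_le_one
      _ = ∑ j, ‖x t j - m t‖ := one_mul _
      _ ≤ ∑ j, ‖u t j‖ / c := Finset.sum_le_sum fun j _ => hxu t j
      _ = a t / c := by rw [hadef, ← Finset.sum_div]
  refine Summable.of_nonneg_of_le (fun t => mul_nonneg (hαpos t).le (norm_nonneg _)) ?_
    (hgsummable.mul_left (2 / c))
  intro t
  have h1 : ‖x t i - (n : ℝ)⁻¹ • ∑ j, x t j‖ ≤ 2 * (a t / c) := by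
    have h0 : x t i - (n : ℝ)⁻¹ • ∑ j, x t j
        = (x t i - m t) - (((n : ℝ)⁻¹ • ∑ j, x t j) - m t) := by abel
    rw [h0]
    have h2 : ‖x t i - m t‖ ≤ a t / c := by
      refine (hxu t i).trans ?_
      gcongr
      exact Finset.single_le_sum (fun j _ => norm_nonneg _) (Finset.mem_univ i)
    calc ‖(x t i - m t) - (((n : ℝ)⁻¹ • ∑ j, x t j) - m t)‖
        ≤ ‖x t i - m t‖ + ‖((n : ℝ)⁻¹ • ∑ j, x t j) - m t‖ := norm_sub_le _ _
      _ ≤ a t / c + a t / c := add_le_add h2 (hxbar t)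
      _ = 2 * (a t / c) := by ring
  calc α t * ‖x t i - (n : ℝ)⁻¹ • ∑ j, x t j‖ ≤ α t * (2 * (a t / c)) :=
        mul_le_mul_of_nonneg_left h1 (hαpos t).le
    _ = 2 / c * (α t * a t) := by field_simp
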